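/- Let F be a sensori-computational device and N ⊆ Y(F) such that every nonempty string s1 s2 … sk ∈ L(F) has first symbol s1 ∈ Y(F) \ N. Then F is P_N-simulatable if and only if F is π_N-simulatable, where both relations are taken over the alphabet Y(F). -/

import Mathlib

/-- A sensori-computational device: a finite nonempty set of states `V`,
a nonempty set `V0` of initial states, observations `Y`, a transition
labelling `tr`, and an output function `out` with nonempty values. -/
structure SCD (Y : Type) (C : Type) : Type 1 where
  V : Type
  finV : Fintype V
  V0 : Set V
  V0_nonempty : V0.Nonempty
  tr : V → V → Set Y
  out : V → Set C
  out_nonempty : ∀ v, (out v).Nonempty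

namespace SCD

variable {Y C : Type}

/-- `Traces F v s w`: string `s` reaches state `w` when traced from `v`. -/
inductive Traces (F : SCD Y C) : F.V → List Y → F.V → Prop
  | nil (v : F.V) : Traces F v [] v
  | cons {v w u : F.V} {y : Y} {s : List Y} :
      y ∈ F.tr v w → Traces F w s u → Traces F v (y :: s) u

/-- The set of states reached by `s` from some initial state. -/
def reached (F : SCD Y C) (s : List Y) : Set F.V :=
  {w | ∃ v0 ∈ F.V0, F.Traces v0 s w}

/-- The (interaction) language of `F`. -/
def lang (F : SCD Y C) : Set (List Y) :=
  {s | (F.reached s).Nonempty}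

/-- The set of outputs of all states reached by `s`. -/
def outs (F : SCD Y C) (s : List Y) : Set C :=
  ⋃ v ∈ F.reached s, F.out v

end SCD

/-- `F'` output simulates `F` modulo the relation `R`. -/
def OutSim {A B C : Type} (F : SCD A C) (F' : SCD B C)
    (R : List A → List B → Prop) : Prop :=
  ∀ s ∈ F.lang,
    (∃ t, R s t) ∧ ∀ t, R s t → t ∈ F'.lang ∧ F'.outs t ⊆ F.outs s

/-- `F` is `R`-simulatable: some device output simulates `F` modulo `R`. -/
def Simulatable {A B C : Type} (F : SCD A C)
    (R : List A → List B → Prop) : Prop :=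
  ∃ F' : SCD B C, OutSim F F' R

/-- Composition of relations (on strings), `R ⨟ S`. -/
def relComp {α β γ : Type*} (R : α → β → Prop) (S : β → γ → Prop) :
    α → γ → Prop :=
  fun a c => ∃ b, R a b ∧ S b c
/-- The `N`-pump: the smallest relation with `ε P ε`, `s P s`, and closed
under inserting a symbol `b ∈ N` at any position except before the first
symbol. -/
inductive Pump {A : Type} (N : Set A) : List A → List A → Prop
  | refl (s : List A) : Pump N s s
  | insert {s t1 t2 : List A} {b : A} :
      b ∈ N → Pump N s (t1 ++ t2) → t1 ≠ [] → Pump N s (t1 ++ b :: t2)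

open Classical in
/-- The `N`-shrink: delete all occurrences of symbols in `N`. -/
noncomputable def shrink {A : Type} (N : Set A) : List A → List A
  | [] => []
  | a :: s => if a ∈ N then shrink N s else a :: shrink N s

/-- The `N`-shrink, as a relation (graph of the function). -/
def shrinkRel {A : Type} (N : Set A) : List A → List A → Prop :=
  fun s t => t = shrink N s


section Mon
variable {M : Type*} [Monoid M] [Finite M]

/-- every element of a finite monoid has an idempotent positive power -/
lemma exists_pow_idem (f : M) : ∃ m, 1 ≤ m ∧ f ^ m * f ^ m = f ^ m := by
  obtain ⟨i, j, hne, hij⟩ :=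
    Finite.exists_ne_map_eq_of_infinite (fun n : ℕ => f ^ n)
  replace hij : f ^ i = f ^ j := hij
  wlog hlt : i < j generalizing i j
  · exact this j i hne.symm hij.symm (by omega)
  set d := j - i with hd
  have hd1 : 1 ≤ d := by omega
  have key : ∀ k, i ≤ k → f ^ (k + d) = f ^ k := by
    intro k hk
    have : f ^ k = f ^ i * f ^ (k - i) := by
      rw [← pow_add]; congr 1; omega
    rw [this, hij]
    rw [← pow_add]; congr 1; omega
  have key2 : ∀ t k, i ≤ k → f ^ (k + t * d) = f ^ k := by
    intro t
    induction t with
    | zero => simp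
    | succ n ih =>
      intro k hk
      have : k + (n+1) * d = (k + d) + n * d := by ring
      rw [this, ih _ (by omega), key _ hk]
  refine ⟨(i+1) * d, by nlinarith, ?_⟩
  rw [← pow_add]
  have : (i+1) * d + (i+1) * d = (i+1)*d + (i+1) * d := rfl
  exact key2 (i+1) ((i+1)*d) (by nlinarith)

/-- the magic idempotent in the minimal ideal: `(e x e) ^ m = e`. -/
lemma exists_magic_idem (S : Set M) (hne : S.Nonempty)
    (hmul : ∀ x ∈ S, ∀ y ∈ S, x * y ∈ S) :
    ∃ e ∈ S, ∀ x ∈ S, ∃ m, 1 ≤ m ∧ (e * x * e) ^ m = e := by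
  classical
  set I : M → Set M := fun f => {g | ∃ a b, g = a * f * b} with hI
  have hIfin : ∀ f, (I f).Finite := fun f => Set.toFinite _
  have hself : ∀ f, f ∈ I f := fun f => ⟨1, 1, by simp⟩
  have hIsub : ∀ (a f b : M), I (a * f * b) ⊆ I f := by
    rintro a f b g ⟨a', b', rfl⟩
    exact ⟨a' * a, b * b', by simp [mul_assoc]⟩
  obtain ⟨f₀, hf₀S, hmin⟩ := Set.exists_min_image S (fun f => (I f).ncard)
    (Set.toFinite S) hne
  -- membership of positive powers
  have hpow : ∀ f ∈ S, ∀ k, 1 ≤ k → f ^ k ∈ S := by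
    intro f hf k hk
    induction k with
    | zero => omega
    | succ n ih =>
      rcases Nat.eq_or_lt_of_le hk with h | h
      · have : n = 0 := by omega
        subst this; simpa using hf
      · have := ih (by omega)
        rw [pow_succ]
        exact hmul _ this _ hf
  -- the key step: for g ∈ S with I g ⊆ I f₀, we get I g = I f₀
  have hEq : ∀ g ∈ S, I g ⊆ I f₀ → I g = I f₀ := by
    intro g hg hsub
    exact Set.eq_of_subset_of_ncard_le hsub (hmin g hg) (hIfin _)
  obtain ⟨m₀, hm₀, hidem⟩ := exists_pow_idem f₀
  set e := f₀ ^ m₀ with he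
  have heS : e ∈ S := hpow f₀ hf₀S m₀ hm₀
  have hee : e * e = e := hidem
  have hIe : I e = I f₀ := by
    apply hEq e heS
    have : e = f₀ ^ (m₀ - 1) * f₀ * 1 := by
      rw [he, mul_one, ← pow_succ]; congr 1; omega
    rw [this]; exact hIsub _ _ _
  refine ⟨e, heS, ?_⟩
  intro x hx
  set y := e * x * e with hy
  have hyS : y ∈ S := hmul _ (hmul _ heS _ hx) _ heS
  have hey : e * y = y := by rw [hy, ← mul_assoc, ← mul_assoc, hee]
  have hye : y * e = y := by rw [hy, mul_assoc, mul_assoc, hee, ← mul_assoc]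
  have hIy : I y = I f₀ := by
    apply hEq y hyS
    rw [← hIe]
    have : y = (e * x) * e * 1 := by rw [mul_one, hy]
    rw [this]; exact hIsub _ _ _
  have heIy : e ∈ I y := by rw [hIy, ← hIe]; exact hself e
  obtain ⟨a, b, hab⟩ := heIy
  -- normalize a b
  set α := e * a * e with hα
  set β := e * b * e with hβ
  have hαyβ : α * y * β = e := by
    have : α * y * β = e * (a * y * b) * e := by
      rw [hα, hβ]
      calc e * a * e * y * (e * b * e)
          = e * a * (e * y) * (e * (b * e)) := by simp [mul_assoc]
        _ = e * a * y * (e * (b * e)) := by rw [hey]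
        _ = e * a * (y * e) * (b * e) := by simp [mul_assoc]
        _ = e * a * y * (b * e) := by rw [hye]
        _ = e * (a * y * b) * e := by simp [mul_assoc]
    rw [this, ← hab, hee, hee]
  have heα : e * α = α := by rw [hα, ← mul_assoc, ← mul_assoc, hee]
  have hαe : α * e = α := by rw [hα, mul_assoc, mul_assoc, hee, ← mul_assoc]
  have heβ : e * β = β := by rw [hβ, ← mul_assoc, ← mul_assoc, hee]
  have hβe : β * e = β := by rw [hβ, mul_assoc, mul_assoc, hee, ← mul_assoc]
  -- the local monoid
  set H : Set M := {h | e * h = h ∧ h * e = h} with hH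
  have heH : e ∈ H := ⟨hee, hee⟩
  have hαH : α ∈ H := ⟨heα, hαe⟩
  have hβH : β ∈ H := ⟨heβ, hβe⟩
  have hyH : y ∈ H := ⟨hey, hye⟩
  have hmulH : ∀ g ∈ H, ∀ h ∈ H, g * h ∈ H := by
    rintro g ⟨hg1, hg2⟩ h ⟨hh1, hh2⟩
    exact ⟨by rw [← mul_assoc, hg1], by rw [mul_assoc, hh2]⟩
  -- left multiplication by α on H is surjective hence injective
  have hLsurj : Function.Surjective (fun h : H => (⟨α * h.1,
      hmulH _ hαH _ h.2⟩ : H)) := by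
    rintro ⟨c, hc⟩
    refine ⟨⟨y * (β * c), hmulH _ hyH _ (hmulH _ hβH _ hc)⟩, ?_⟩
    apply Subtype.ext
    show α * (y * (β * c)) = c
    calc α * (y * (β * c)) = (α * y * β) * c := by simp [mul_assoc]
      _ = e * c := by rw [hαyβ]
      _ = c := hc.1
  have hLinj := (Finite.injective_iff_surjective).2 hLsurj
  -- get r * α = e where r = y * β
  have hrα : (y * β) * α = e := by
    have h1 : α * ((y * β) * α) = α * e := by
      rw [hαe]
      calc α * (y * β * α) = (α * y * β) * α := by simp [mul_assoc]
        _ = e * α := by rw [hαyβ]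
        _ = α := heα
    have := hLinj (a₁ := ⟨(y*β)*α, hmulH _ (hmulH _ hyH _ hβH) _ hαH⟩)
      (a₂ := ⟨e, heH⟩) (by apply Subtype.ext; exact h1)
    exact congrArg Subtype.val this
  have hyq : y * (β * α) = e := by rw [← mul_assoc]; exact hrα
  -- right multiplication by β on H surjective hence injective
  have hRsurj : Function.Surjective (fun h : H => (⟨h.1 * β,
      hmulH _ h.2 _ hβH⟩ : H)) := by
    rintro ⟨c, hc⟩
    refine ⟨⟨c * α * y, hmulH _ (hmulH _ hc _ hαH) _ hyH⟩, ?_⟩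
    apply Subtype.ext
    show c * α * y * β = c
    calc c * α * y * β = c * (α * y * β) := by simp [mul_assoc]
      _ = c * e := by rw [hαyβ]
      _ = c := hc.2
  have hRinj := (Finite.injective_iff_surjective).2 hRsurj
  have hβl : β * (α * y) = e := by
    have h1 : (β * (α * y)) * β = e * β := by
      rw [heβ]
      calc β * (α * y) * β = β * (α * y * β) := by simp [mul_assoc]
        _ = β * e := by rw [hαyβ]
        _ = β := hβe
    have := hRinj (a₁ := ⟨β * (α * y), hmulH _ hβH _ (hmulH _ hαH _ hyH)⟩)
      (a₂ := ⟨e, heH⟩) (by apply Subtype.ext; exact h1)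
    exact congrArg Subtype.val this
  have hqy : (β * α) * y = e := by rw [mul_assoc]; exact hβl
  set q := β * α with hq
  -- powers: e * y ^ k = y ^ k for k ≥ 1
  have heypow : ∀ k, 1 ≤ k → e * y ^ k = y ^ k := by
    intro k hk
    induction k with
    | zero => omega
    | succ n ih =>
      rcases Nat.eq_or_lt_of_le hk with h | h
      · have : n = 0 := by omega
        subst this; simpa using hey
      · rw [pow_succ, ← mul_assoc, ih (by omega)]
  have hqpow : ∀ k, 1 ≤ k → q ^ k * y ^ k = e := by
    intro k hk
    induction k with
    | zero => omega
    | succ n ih =>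
      rcases Nat.eq_or_lt_of_le hk with h | h
      · have : n = 0 := by omega
        subst this; simpa using hqy
      · have hn : 1 ≤ n := by omega
        calc q ^ (n+1) * y ^ (n+1) = q ^ n * (q * y) * y ^ n := by
              rw [pow_succ, pow_succ']; simp [mul_assoc]
          _ = q ^ n * (e * y ^ n) := by rw [hqy]; simp [mul_assoc]
          _ = q ^ n * y ^ n := by rw [heypow n hn]
          _ = e := ih hn
  -- pigeonhole on positive powers of y
  obtain ⟨i, j, hne', hij⟩ :=
    Finite.exists_ne_map_eq_of_infinite (fun n : ℕ => y ^ (n+1))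
  replace hij : y ^ (i+1) = y ^ (j+1) := hij
  wlog hlt : i < j generalizing i j
  · exact this j i hne'.symm hij.symm (by omega)
  refine ⟨j - i, by omega, ?_⟩
  show y ^ (j - i) = e
  calc y ^ (j-i) = e * y ^ (j-i) := (heypow _ (by omega)).symm
    _ = q ^ (i+1) * y ^ (i+1) * y ^ (j-i) := by rw [hqpow (i+1) (by omega)]
    _ = q ^ (i+1) * y ^ (j+1) := by
        rw [mul_assoc, ← pow_add]; congr 2; omega
    _ = q ^ (i+1) * y ^ (i+1) := by rw [hij]
    _ = e := hqpow (i+1) (by omega)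
end Mon

section Infra
open SCD
variable {Y C : Type}

lemma traces_nil_iff (F : SCD Y C) (v w : F.V) :
    F.Traces v [] w ↔ v = w := by
  constructor
  · intro h; cases h; rfl
  · rintro rfl; exact Traces.nil v

lemma traces_cons_iff (F : SCD Y C) (v w : F.V) (y : Y) (s : List Y) :
    F.Traces v (y :: s) w ↔ ∃ u, y ∈ F.tr v u ∧ F.Traces u s w := by
  constructor
  · intro h; cases h with
    | cons hy ht => exact ⟨_, hy, ht⟩
  · rintro ⟨u, hy, ht⟩; exact Traces.cons hy ht

lemma traces_append_iff (F : SCD Y C) (s t : List Y) (v w : F.V) :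
    F.Traces v (s ++ t) w ↔ ∃ m, F.Traces v s m ∧ F.Traces m t w := by
  induction s generalizing v with
  | nil =>
    simp only [List.nil_append, traces_nil_iff]
    constructor
    · intro h; exact ⟨v, rfl, h⟩
    · rintro ⟨m, rfl, h⟩; exact h
  | cons a s ih =>
    simp only [List.cons_append, traces_cons_iff, ih]
    constructor
    · rintro ⟨u, hy, m, h1, h2⟩; exact ⟨m, ⟨u, hy, h1⟩, h2⟩
    · rintro ⟨m, ⟨u, hy, h1⟩, h2⟩; exact ⟨u, hy, m, h1, h2⟩

/-- trace function of a word, as an element of `Function.End (Set F.V)` -/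
def phi (F : SCD Y C) (t : List Y) : Function.End (Set F.V) :=
  fun S => {w | ∃ v ∈ S, F.Traces v t w}

lemma phi_nil (F : SCD Y C) : phi F [] = 1 := by
  funext S; ext w
  show (∃ v ∈ S, F.Traces v [] w) ↔ w ∈ S
  constructor
  · rintro ⟨v, hv, h⟩; rw [traces_nil_iff] at h; subst h; exact hv
  · intro h; exact ⟨w, h, Traces.nil w⟩

lemma phi_append (F : SCD Y C) (s t : List Y) :
    phi F (s ++ t) = phi F t * phi F s := by
  funext S; ext w
  show (∃ v ∈ S, F.Traces v (s ++ t) w) ↔ ∃ m ∈ phi F s S, F.Traces m t w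
  simp only [traces_append_iff]
  constructor
  · rintro ⟨v, hv, m, h1, h2⟩; exact ⟨m, ⟨v, hv, h1⟩, h2⟩
  · rintro ⟨m, ⟨v, hv, h1⟩, h2⟩; exact ⟨v, hv, m, h1, h2⟩

lemma reached_eq_phi (F : SCD Y C) (s : List Y) :
    F.reached s = phi F s F.V0 := rfl

lemma outs_congr (F : SCD Y C) {s t : List Y}
    (h : F.reached s = F.reached t) : F.outs s = F.outs t := by
  unfold SCD.outs; rw [h]

instance phiFinite (F : SCD Y C) : Finite (Function.End (Set F.V)) := by
  haveI := F.finV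
  have : Finite F.V := Finite.of_fintype F.V
  exact inferInstanceAs (Finite (Set F.V → Set F.V))

/-- iterated word -/
def repw {Y : Type} (m : ℕ) (z : List Y) : List Y :=
  match m with
  | 0 => []
  | m+1 => z ++ repw m z

lemma phi_repw (F : SCD Y C) (z : List Y) (m : ℕ) :
    phi F (repw m z) = (phi F z) ^ m := by
  induction m with
  | zero => simpa [repw] using phi_nil F
  | succ n ih => rw [repw, phi_append, ih, pow_succ]

lemma mem_repw {Y : Type} {N : Set Y} {z : List Y} (hz : ∀ a ∈ z, a ∈ N)
    (m : ℕ) : ∀ a ∈ repw m z, a ∈ N := by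
  induction m with
  | zero => simp [repw]
  | succ n ih =>
    intro a ha
    rw [repw, List.mem_append] at ha
    rcases ha with h | h
    · exact hz a h
    · exact ih a h

/- ---- shrink lemmas ---- -/

lemma shrink_nil {A : Type} (N : Set A) : shrink N [] = [] := rfl

lemma shrink_cons_mem {A : Type} {N : Set A} {a : A} (h : a ∈ N)
    (s : List A) : shrink N (a :: s) = shrink N s := by
  simp [shrink, h]

lemma shrink_cons_not_mem {A : Type} {N : Set A} {a : A} (h : a ∉ N)
    (s : List A) : shrink N (a :: s) = a :: shrink N s := by
  simp [shrink, h]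

lemma shrink_append {A : Type} (N : Set A) (s t : List A) :
    shrink N (s ++ t) = shrink N s ++ shrink N t := by
  induction s with
  | nil => simp [shrink_nil]
  | cons a s ih =>
    by_cases h : a ∈ N
    · rw [List.cons_append, shrink_cons_mem h, shrink_cons_mem h, ih]
    · rw [List.cons_append, shrink_cons_not_mem h, shrink_cons_not_mem h,
        ih, List.cons_append]

lemma shrink_eq_nil {A : Type} {N : Set A} {s : List A}
    (h : ∀ a ∈ s, a ∈ N) : shrink N s = [] := by
  induction s with
  | nil => rfl
  | cons a s ih =>
    rw [shrink_cons_mem (h a (by simp))]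
    exact ih (fun b hb => h b (by simp [hb]))

lemma shrink_of_pump {A : Type} {N : Set A} {s t : List A}
    (h : Pump N s t) : shrink N t = shrink N s := by
  induction h with
  | refl => rfl
  | insert hb _ _ ih =>
    rw [shrink_append, shrink_cons_mem hb, ← shrink_append, ih]

/- ---- pump lemmas ---- -/

lemma pump_trans {A : Type} {N : Set A} {s t r : List A}
    (h1 : Pump N s t) (h2 : Pump N t r) : Pump N s r := by
  induction h2 with
  | refl => exact h1
  | insert hb _ hne ih => exact Pump.insert hb ih hne

lemma pump_append_left {A : Type} {N : Set A} (x : List A) {s t : List A}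
    (h : Pump N s t) : Pump N (x ++ s) (x ++ t) := by
  induction h with
  | refl => exact Pump.refl _
  | @insert t1 t2 b hb hp hne ih =>
    have := Pump.insert (t1 := x ++ t1) (t2 := t2) hb
      (by rwa [List.append_assoc])
      (by simp [hne])
    rw [List.append_assoc] at this
    exact this

lemma pump_append {A : Type} {N : Set A} {s t s' t' : List A}
    (hs : s ≠ []) (h1 : Pump N s t) (h2 : Pump N s' t') :
    Pump N (s ++ s') (t ++ t') := by
  have step1 : Pump N (s ++ s') (s ++ t') := pump_append_left s h2
  have step2 : Pump N (s ++ t') (t ++ t') := by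
    clear step1 h2
    induction h1 with
    | refl => exact Pump.refl _
    | @insert t1 t2 b hb hp hne ih =>
      have := Pump.insert (t1 := t1) (t2 := t2 ++ t') hb
        (by rwa [← List.append_assoc]) hne
      simpa using this
  exact pump_trans step1 step2

end Infra

section Part2
open SCD
variable {Y C : Type}

lemma head?_dropWhile_not (p : Y → Bool) (l : List Y) {a : Y}
    (h : (l.dropWhile p).head? = some a) : p a = false := by
  induction l with
  | nil => simp at h
  | cons b l ih =>
    rw [List.dropWhile_cons] at h
    by_cases hb : p b
    · rw [if_pos hb] at h; exact ih h
    · rw [if_neg hb] at h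
      simp only [List.head?_cons, Option.some.injEq] at h
      subst h
      simpa using hb

/- block pump lemmas -/

lemma pump_snoc_block {N : Set Y} {s : List Y} (hs : s ≠ []) {Yl : List Y}
    (hY : ∀ a ∈ Yl, a ∈ N) : Pump N s (s ++ Yl) := by
  induction Yl with
  | nil => simpa using Pump.refl s
  | cons b Yl ih =>
    exact Pump.insert (t1 := s) (t2 := Yl) (hY b (by simp))
      (ih (fun a ha => hY a (by simp [ha]))) hs

lemma pump_insert_block {N : Set Y} {s t1 t2 : List Y}
    (h : Pump N s (t1 ++ t2)) (ht1 : t1 ≠ []) {X : List Y}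
    (hX : ∀ a ∈ X, a ∈ N) : Pump N s (t1 ++ (X ++ t2)) := by
  induction X with
  | nil => simpa using h
  | cons b X ih =>
    have := Pump.insert (t1 := t1) (t2 := X ++ t2) (hX b (by simp))
      (ih (fun a ha => hX a (by simp [ha]))) ht1
    simpa using this

lemma pump_block {N : Set Y} (y : Y) (w X Yl : List Y)
    (hX : ∀ a ∈ X, a ∈ N) (hY : ∀ a ∈ Yl, a ∈ N) :
    Pump N (y :: w) (y :: (X ++ (w ++ Yl))) := by
  have h1 : Pump N (y :: w) ([y] ++ (w ++ Yl)) := by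
    simpa using pump_snoc_block (N := N) (s := y :: w) (by simp) hY
  have h2 := pump_insert_block h1 (by simp) hX
  simpa using h2

/- the interleaving word -/

def ilv (z : List Y) : List Y → List Y
  | [] => []
  | y :: u => y :: (z ++ ilv z u)

/- the device for the shrink→pump direction: add self-loops on N -/

def addLoops (F' : SCD Y C) (N : Set Y) : SCD Y C where
  V := F'.V
  finV := F'.finV
  V0 := F'.V0
  V0_nonempty := F'.V0_nonempty
  tr v w := (F'.tr v w \ N) ∪ {y | y ∈ N ∧ v = w}
  out := F'.out
  out_nonempty := F'.out_nonempty

lemma addLoops_traces (F' : SCD Y C) (N : Set Y) (t : List Y)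
    (v w : F'.V) :
    (addLoops F' N).Traces v t w ↔ F'.Traces v (shrink N t) w := by
  induction t generalizing v with
  | nil => rw [shrink_nil, traces_nil_iff]; exact traces_nil_iff (addLoops F' N) v w
  | cons a t ih =>
    refine (traces_cons_iff (addLoops F' N) v w a t).trans ?_
    by_cases ha : a ∈ N
    · rw [shrink_cons_mem ha]
      constructor
      · rintro ⟨u, hy, htr⟩
        rcases hy with h | h
        · exact absurd ha h.2
        · obtain ⟨-, rfl⟩ := h
          exact (ih _).1 htr
      · intro htr
        exact ⟨v, Or.inr ⟨ha, rfl⟩, (ih v).2 htr⟩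
    · rw [shrink_cons_not_mem ha, traces_cons_iff]
      constructor
      · rintro ⟨u, hy, htr⟩
        rcases hy with h | h
        · exact ⟨u, h.1, (ih u).1 htr⟩
        · exact absurd h.1 ha
      · rintro ⟨u, hy, htr⟩
        exact ⟨u, Or.inl ⟨hy, ha⟩, (ih u).2 htr⟩

lemma addLoops_reached (F' : SCD Y C) (N : Set Y) (t : List Y) :
    (addLoops F' N).reached t = F'.reached (shrink N t) := by
  ext w
  unfold SCD.reached
  simp only [Set.mem_setOf_eq]
  constructor
  · rintro ⟨v0, h0, htr⟩; exact ⟨v0, h0, (addLoops_traces F' N t v0 w).1 htr⟩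
  · rintro ⟨v0, h0, htr⟩; exact ⟨v0, h0, (addLoops_traces F' N t v0 w).2 htr⟩

lemma addLoops_outs (F' : SCD Y C) (N : Set Y) (t : List Y) :
    (addLoops F' N).outs t = F'.outs (shrink N t) := by
  unfold SCD.outs
  rw [addLoops_reached]
  rfl

/- the device for the pump→shrink direction: insert `z` after each symbol -/

def zDev (F' : SCD Y C) (z : List Y) : SCD Y C where
  V := F'.V
  finV := F'.finV
  V0 := F'.V0
  V0_nonempty := F'.V0_nonempty
  tr v w := {y | ∃ v', y ∈ F'.tr v v' ∧ F'.Traces v' z w}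
  out := F'.out
  out_nonempty := F'.out_nonempty

lemma zDev_traces (F' : SCD Y C) (z : List Y) (u : List Y) (v w : F'.V) :
    (zDev F' z).Traces v u w ↔ F'.Traces v (ilv z u) w := by
  induction u generalizing v with
  | nil => rw [show ilv z [] = [] from rfl, traces_nil_iff]; exact traces_nil_iff (zDev F' z) v w
  | cons y u ih =>
    rw [show ilv z (y :: u) = y :: (z ++ ilv z u) from rfl,
      traces_cons_iff]
    refine (traces_cons_iff (zDev F' z) v w y u).trans ?_
    constructor
    · rintro ⟨u1, ⟨v', hy, hz⟩, htr⟩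
      refine ⟨v', hy, ?_⟩
      rw [traces_append_iff]
      exact ⟨u1, hz, (ih u1).1 htr⟩
    · rintro ⟨v', hy, htr⟩
      rw [traces_append_iff] at htr
      obtain ⟨m, h1, h2⟩ := htr
      exact ⟨m, ⟨v', hy, h1⟩, (ih m).2 h2⟩

lemma zDev_reached (F' : SCD Y C) (z : List Y) (u : List Y) :
    (zDev F' z).reached u = F'.reached (ilv z u) := by
  ext w
  unfold SCD.reached
  simp only [Set.mem_setOf_eq]
  constructor
  · rintro ⟨v0, h0, htr⟩; exact ⟨v0, h0, (zDev_traces F' z u v0 w).1 htr⟩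
  · rintro ⟨v0, h0, htr⟩; exact ⟨v0, h0, (zDev_traces F' z u v0 w).2 htr⟩

lemma zDev_outs (F' : SCD Y C) (z : List Y) (u : List Y) :
    (zDev F' z).outs u = F'.outs (ilv z u) := by
  unfold SCD.outs
  rw [zDev_reached]
  rfl

/- the pump construction -/

lemma pump_construct (F' : SCD Y C) (N : Set Y) (z : List Y)
    (hz2 : ∀ w : List Y, (∀ a ∈ w, a ∈ N) →
      ∃ B : List Y, (∀ (y : Y), Pump N (y :: w) (y :: B)) ∧
        phi F' B = phi F' z) :
    ∀ n (s : List Y), s.length ≤ n → (∀ a : Y, s.head? = some a → a ∉ N) →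
      ∃ t, Pump N s t ∧ phi F' t = phi F' (ilv z (shrink N s)) := by
  classical
  intro n
  induction n with
  | zero =>
    intro s hs _
    have : s = [] := List.length_eq_zero_iff.1 (by omega)
    subst this
    exact ⟨[], Pump.refl [], by rw [shrink_nil]; rfl⟩
  | succ n ih =>
    intro s hs hhead
    match s with
    | [] => exact ⟨[], Pump.refl [], by rw [shrink_nil]; rfl⟩
    | y :: r =>
      have hy : y ∉ N := hhead y rfl
      set p : Y → Bool := fun a => decide (a ∈ N) with hp
      set w := r.takeWhile p with hw
      set s' := r.dropWhile p with hs'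
      have hr : w ++ s' = r := by
        rw [hw, hs']; exact List.takeWhile_append_dropWhile
      have hwN : ∀ a ∈ w, a ∈ N := by
        intro a ha
        have := List.mem_takeWhile_imp ha
        rw [hp] at this
        exact of_decide_eq_true this
      have hs'head : ∀ a : Y, s'.head? = some a → a ∉ N := by
        intro a ha
        have := head?_dropWhile_not p r ha
        rw [hp] at this
        simpa using this
      have hs'len : s'.length ≤ n := by
        have h1 : s'.length ≤ r.length := (List.dropWhile_sublist p).length_le
        have h2 : r.length + 1 ≤ n + 1 := by simpa using hs
        omega
      obtain ⟨t', hpump', hphi'⟩ := ih s' hs'len hs'head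
      obtain ⟨B, hBpump, hBphi⟩ := hz2 w hwN
      refine ⟨(y :: B) ++ t', ?_, ?_⟩
      · have h1 : Pump N ((y :: w) ++ s') ((y :: B) ++ t') :=
          pump_append (by simp) (hBpump y) hpump'
        rw [show (y :: w) ++ s' = y :: (w ++ s') from rfl, hr] at h1
        exact h1
      · have hshr : shrink N (y :: r) = y :: shrink N s' := by
          rw [shrink_cons_not_mem hy, ← hr, shrink_append,
            shrink_eq_nil hwN, List.nil_append]
        rw [hshr, show ilv z (y :: shrink N s') =
          y :: (z ++ ilv z (shrink N s')) from rfl]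
        rw [show (y :: B) ++ t' = [y] ++ (B ++ t') from rfl,
          show (y : Y) :: (z ++ ilv z (shrink N s')) =
            [y] ++ (z ++ ilv z (shrink N s')) from rfl,
          phi_append, phi_append, phi_append, phi_append, hphi', hBphi]
end Part2


/-- if every nonempty string of `L(F)` starts with a symbol
outside `N`, then `F` is `P_N`-simulatable iff `F` is `π_N`-simulatable. -/
theorem stmt13 {Y C : Type} (F : SCD Y C) (N : Set Y)
    (hfirst : ∀ s ∈ F.lang, ∀ a : Y, s.head? = some a → a ∉ N) :
    Simulatable F (Pump N) ↔ Simulatable F (shrinkRel N) := by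
  classical
  constructor
  · rintro ⟨F', hF'⟩
    -- the monoid of trace functions of N-words
    set S : Set (Function.End (Set F'.V)) :=
      {g | ∃ w : List Y, (∀ a ∈ w, a ∈ N) ∧ g = phi F' w} with hS
    have hne : S.Nonempty := ⟨phi F' [], [], by simp, rfl⟩
    have hmul : ∀ x ∈ S, ∀ y ∈ S, x * y ∈ S := by
      rintro x ⟨w1, hw1, rfl⟩ y ⟨w2, hw2, rfl⟩
      refine ⟨w2 ++ w1, ?_, (phi_append F' w2 w1).symm⟩
      intro a ha
      rcases List.mem_append.1 ha with h | h
      exacts [hw2 a h, hw1 a h]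
    obtain ⟨e, heS, hmagic⟩ := exists_magic_idem S hne hmul
    obtain ⟨z, hzN, hez⟩ := heS
    have hz2 : ∀ w : List Y, (∀ a ∈ w, a ∈ N) →
        ∃ B : List Y, (∀ (y : Y), Pump N (y :: w) (y :: B)) ∧
          phi F' B = phi F' z := by
      intro w hwN
      obtain ⟨m, hm1, hm⟩ := hmagic (phi F' w) ⟨w, hwN, rfl⟩
      have hWN : ∀ a ∈ z ++ w ++ z, a ∈ N := by
        intro a ha
        rcases List.mem_append.1 ha with h | h
        · rcases List.mem_append.1 h with h' | h'
          exacts [hzN a h', hwN a h']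
        · exact hzN a h
      refine ⟨repw m (z ++ w ++ z), ?_, ?_⟩
      · intro y
        obtain ⟨k, rfl⟩ : ∃ k, m = k + 1 := ⟨m - 1, by omega⟩
        have hrep : repw (k+1) (z ++ w ++ z) =
            z ++ (w ++ (z ++ repw k (z ++ w ++ z))) := by
          show (z ++ w ++ z) ++ repw k (z ++ w ++ z) = _
          simp [List.append_assoc]
        rw [hrep]
        refine pump_block y w z (z ++ repw k (z ++ w ++ z)) hzN ?_
        intro a ha
        rcases List.mem_append.1 ha with h | h
        exacts [hzN a h, mem_repw hWN k a h]
      · rw [phi_repw]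
        have hphiW : phi F' (z ++ w ++ z) = e * phi F' w * e := by
          rw [phi_append, phi_append, hez]
          exact (mul_assoc _ _ _).symm
        rw [hphiW, hm]
        exact hez
    refine ⟨zDev F' z, ?_⟩
    intro s hsL
    refine ⟨⟨shrink N s, rfl⟩, ?_⟩
    rintro t rfl
    obtain ⟨t'', hpump, hphi⟩ :=
      pump_construct F' N z hz2 s.length s le_rfl (hfirst s hsL)
    obtain ⟨-, h2⟩ := hF' s hsL
    obtain ⟨hlang, houts⟩ := h2 t'' hpump
    have hreach : F'.reached (ilv z (shrink N s)) = F'.reached t'' := by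
      rw [reached_eq_phi, reached_eq_phi, hphi]
    constructor
    · show ((zDev F' z).reached (shrink N s)).Nonempty
      rw [zDev_reached, hreach]
      exact hlang
    · have houts' : (zDev F' z).outs (shrink N s) = F'.outs t'' := by
        rw [zDev_outs]
        exact outs_congr F' hreach
      rw [houts']
      exact houts
  · rintro ⟨F', hF'⟩
    refine ⟨addLoops F' N, ?_⟩
    intro s hsL
    refine ⟨⟨s, Pump.refl s⟩, ?_⟩
    intro t hpt
    obtain ⟨-, h2⟩ := hF' s hsL
    obtain ⟨hlang, houts⟩ := h2 (shrink N s) rfl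
    have hsh : shrink N t = shrink N s := shrink_of_pump hpt
    constructor
    · show ((addLoops F' N).reached t).Nonempty
      rw [addLoops_reached, hsh]
      exact hlang
    · rw [addLoops_outs, hsh]
      exact houts
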